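/- Let n ≥ 1 and m := ⌊n/2⌋. Let φ : ℤⁿ → ℤ^m be the group homomorphism defined by φ(e)ⱼ = eⱼ − e_{n+1−j} for 1 ≤ j ≤ m, and let Ψ : ℂ[ℤⁿ] → ℂ[ℤ^m] be the induced ℂ-algebra homomorphism of group algebras (sending the basis element corresponding to e ∈ ℤⁿ to the basis element corresponding to φ(e)). Then for every element f ∈ ℂ[ℤⁿ] that is invariant under the action of the symmetric group Sₙ permuting the coordinates of ℤⁿ, the image Ψ(f) is invariant under the hyperoctahedral group S_m ⋉ (ℤ/2ℤ)^m acting on ℂ[ℤ^m], where S_m permutes the coordinates of ℤ^m and each generator of (ℤ/2ℤ)^m negates one coordinate of ℤ^m. -/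

import Mathlib

def phiMap (n : ℕ) : (Fin n → ℤ) →+ (Fin (n / 2) → ℤ) where
  toFun e := fun j =>
    e ⟨(j : ℕ), by have := j.isLt; omega⟩ -
      e ⟨n - 1 - (j : ℕ), by have := j.isLt; omega⟩
  map_zero' := by
    funext j
    simp
  map_add' a b := by
    funext j
    simp only [Pi.add_apply]
    ring

def sigmaAux (n : ℕ) (τ : Equiv.Perm (Fin (n / 2))) (ε : Fin (n / 2) → Bool) :
    Fin n → Fin n := fun i =>
  if h : (i : ℕ) < n / 2 then
    if ε ⟨i, h⟩ then
      ⟨n - 1 - (τ ⟨i, h⟩ : ℕ), by have := (τ ⟨i, h⟩).isLt; have := i.isLt; omega⟩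
    else ⟨(τ ⟨i, h⟩ : ℕ), by have := (τ ⟨i, h⟩).isLt; have := i.isLt; omega⟩
  else if h2 : n - 1 - (i : ℕ) < n / 2 then
    if ε ⟨n - 1 - (i : ℕ), h2⟩ then
      ⟨(τ ⟨n - 1 - (i : ℕ), h2⟩ : ℕ), by have := (τ ⟨n - 1 - (i : ℕ), h2⟩).isLt; have := i.isLt; omega⟩
    else ⟨n - 1 - (τ ⟨n - 1 - (i : ℕ), h2⟩ : ℕ), by have := (τ ⟨n - 1 - (i : ℕ), h2⟩).isLt; have := i.isLt; omega⟩
  else i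

lemma sigmaAux_left_inv (n : ℕ) (τ : Equiv.Perm (Fin (n / 2))) (ε : Fin (n / 2) → Bool)
    (i : Fin n) : sigmaAux n τ⁻¹ (ε ∘ ⇑τ⁻¹) (sigmaAux n τ ε i) = i := by
  unfold sigmaAux
  have hi := i.isLt
  by_cases h : (i : ℕ) < n / 2
  · rw [dif_pos h]
    have hτ := (τ ⟨i, h⟩).isLt
    by_cases hε : ε ⟨i, h⟩
    · rw [if_pos hε]
      rw [dif_neg (by simp only []; omega), dif_pos (by simp only []; omega)]
      have hmk : (⟨n - 1 - (((⟨n - 1 - (τ ⟨i, h⟩ : ℕ), by omega⟩ : Fin n)) : ℕ),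
          by simp only []; omega⟩ : Fin (n / 2)) = τ ⟨i, h⟩ :=
        Fin.ext (by simp; omega)
      simp only [hmk, Function.comp_apply, Equiv.Perm.coe_inv, Equiv.symm_apply_apply, hε, if_true]
    · rw [if_neg hε]
      rw [dif_pos (by simpa using hτ)]
      have hmk : (⟨((⟨(τ ⟨i, h⟩ : ℕ), by omega⟩ : Fin n) : ℕ), by simpa using hτ⟩ : Fin (n / 2))
          = τ ⟨i, h⟩ := Fin.ext (by simp)
      simp only [hmk, Function.comp_apply, Equiv.Perm.coe_inv, Equiv.symm_apply_apply, hε,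
        Bool.false_eq_true, if_false]
  · by_cases h2 : n - 1 - (i : ℕ) < n / 2
    · rw [dif_neg h, dif_pos h2]
      have hτ := (τ ⟨n - 1 - (i : ℕ), h2⟩).isLt
      by_cases hε : ε ⟨n - 1 - (i : ℕ), h2⟩
      · rw [if_pos hε]
        rw [dif_pos (by simpa using hτ)]
        have hmk : (⟨((⟨(τ ⟨n - 1 - (i : ℕ), h2⟩ : ℕ), by omega⟩ : Fin n) : ℕ),
            by simpa using hτ⟩ : Fin (n / 2)) = τ ⟨n - 1 - (i : ℕ), h2⟩ := Fin.ext (by simp)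
        simp only [hmk, Function.comp_apply, Equiv.Perm.coe_inv, Equiv.symm_apply_apply, hε, if_true]
        exact Fin.ext (by simp; omega)
      · rw [if_neg hε]
        rw [dif_neg (by simp only []; omega), dif_pos (by simp only []; omega)]
        have hmk : (⟨n - 1 - ((⟨n - 1 - (τ ⟨n - 1 - (i : ℕ), h2⟩ : ℕ), by omega⟩ : Fin n) : ℕ),
            by simp only []; omega⟩ : Fin (n / 2)) = τ ⟨n - 1 - (i : ℕ), h2⟩ :=
          Fin.ext (by simp; omega)
        simp only [hmk, Function.comp_apply, Equiv.Perm.coe_inv, Equiv.symm_apply_apply, hε,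
          Bool.false_eq_true, if_false]
        exact Fin.ext (by simp; omega)
    · rw [dif_neg h, dif_neg h2, dif_neg h, dif_neg h2]

def sigmaEquiv (n : ℕ) (τ : Equiv.Perm (Fin (n / 2))) (ε : Fin (n / 2) → Bool) :
    Equiv.Perm (Fin n) where
  toFun := sigmaAux n τ ε
  invFun := sigmaAux n τ⁻¹ (ε ∘ ⇑τ⁻¹)
  left_inv := sigmaAux_left_inv n τ ε
  right_inv := fun i => by
    have h1 := sigmaAux_left_inv n τ⁻¹ (ε ∘ ⇑τ⁻¹) i
    rw [inv_inv] at h1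
    rw [show (ε ∘ ⇑τ⁻¹) ∘ ⇑τ = ε from funext fun x => by simp] at h1
    exact h1

lemma phi_comp (n : ℕ) (τ : Equiv.Perm (Fin (n / 2))) (ε : Fin (n / 2) → Bool)
    (e : Fin n → ℤ) :
    (fun j => if ε j then -((phiMap n) e (τ j)) else (phiMap n) e (τ j))
      = phiMap n (e ∘ sigmaAux n τ ε) := by
  funext j
  have hj := j.isLt
  have hτ := (τ j).isLt
  simp only [phiMap, AddMonoidHom.coe_mk, ZeroHom.coe_mk, Function.comp_apply]
  unfold sigmaAux
  rw [dif_pos (by simpa using hj)]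
  rw [dif_neg (by simp only []; omega), dif_pos (by simp only []; omega)]
  have hmk1 : (⟨((⟨(j : ℕ), by omega⟩ : Fin n) : ℕ), by simpa using hj⟩ : Fin (n / 2)) = j :=
    Fin.ext (by simp)
  have hmk2 : (⟨n - 1 - ((⟨n - 1 - (j : ℕ), by omega⟩ : Fin n) : ℕ),
      by simp only []; omega⟩ : Fin (n / 2)) = j := Fin.ext (by simp; omega)
  simp only [hmk1, hmk2]
  by_cases hε : ε j
  · simp only [hε, if_true]
    ring
  · simp only [hε, Bool.false_eq_true, if_false]

theorem stmt12 (n : ℕ) (hn : 1 ≤ n) (f : (Fin n → ℤ) →₀ ℂ)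
    (hf : ∀ σ : Equiv.Perm (Fin n),
      Finsupp.mapDomain (fun e : Fin n → ℤ => e ∘ σ) f = f) :
    ∀ (τ : Equiv.Perm (Fin (n / 2))) (ε : Fin (n / 2) → Bool),
      Finsupp.mapDomain
        (fun v : Fin (n / 2) → ℤ => fun j => if ε j then -(v (τ j)) else v (τ j))
        (Finsupp.mapDomain (⇑(phiMap n)) f)
      = Finsupp.mapDomain (⇑(phiMap n)) f := by
  intro τ ε
  rw [← Finsupp.mapDomain_comp]
  have key : (fun v : Fin (n / 2) → ℤ => fun j => if ε j then -(v (τ j)) else v (τ j))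
      ∘ ⇑(phiMap n)
      = ⇑(phiMap n) ∘ (fun e : Fin n → ℤ => e ∘ (sigmaEquiv n τ ε)) := by
    funext e
    exact phi_comp n τ ε e
  rw [key, Finsupp.mapDomain_comp, hf (sigmaEquiv n τ ε)]
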